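/- Let R be a finite group and σ an automorphism of R. Let Λ denote the poset (ordered by inclusion) of σ-invariant subgroups of R, and let μ_Λ be its Möbius function. Then ∑_{Q ∈ Λ} |{y ∈ Q : σ(y) = y}| · μ_Λ(Q, R) = |{y ∈ R : σ(y) = y and ⟨y⟩ = R}|, i.e. this Möbius-weighted sum of the numbers of σ-fixed points of the σ-invariant subgroups equals the number of σ-fixed generators of R. -/

import Mathlib

/-- Let `R` be a finite group and `σ` an automorphism of `R`. Let `Λ` be the poset of
`σ`-invariant subgroups of `R` and `μ` its Möbius function (characterized by `μ Q Q = 1`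
and `∑_{Q₁ ≤ Z ≤ Q₂} μ Z Q₂ = 0` for `Q₁ < Q₂`). Then
`∑_{Q ∈ Λ} |{y ∈ Q : σ y = y}| · μ Q R = |{y ∈ R : σ y = y and ⟨y⟩ = R}|`. -/
theorem stmt4 (R : Type*) [Group R] [Fintype R] (σ : R ≃* R)
    (μ : {Q : Subgroup R // Q.map σ.toMonoidHom = Q} →
         {Q : Subgroup R // Q.map σ.toMonoidHom = Q} → ℤ)
    (hμrefl : ∀ Q, μ Q Q = 1)
    (hμsum : ∀ Q₁ Q₂, Q₁ < Q₂ →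
      (∑ᶠ Z ∈ {Z : {Q : Subgroup R // Q.map σ.toMonoidHom = Q} | Q₁ ≤ Z ∧ Z ≤ Q₂},
        μ Z Q₂) = 0)
    (hTop : (⊤ : Subgroup R).map σ.toMonoidHom = ⊤) :
    (∑ᶠ Q : {Q : Subgroup R // Q.map σ.toMonoidHom = Q},
        (Nat.card {y : R // y ∈ Q.1 ∧ σ y = y} : ℤ) * μ Q ⟨⊤, hTop⟩)
      = (Nat.card {y : R // σ y = y ∧ Subgroup.zpowers y = ⊤} : ℤ) := by
  classical
  haveI : Fintype {Q : Subgroup R // Q.map σ.toMonoidHom = Q} := Fintype.ofFinite _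
  set T : {Q : Subgroup R // Q.map σ.toMonoidHom = Q} := ⟨⊤, hTop⟩ with hT
  have hleT : ∀ Q : {Q : Subgroup R // Q.map σ.toMonoidHom = Q}, Q ≤ T := by
    intro Q; exact Subtype.coe_le_coe.mp le_top
  rw [finsum_eq_sum_of_fintype]
  have hcard : ∀ Q : {Q : Subgroup R // Q.map σ.toMonoidHom = Q},
      (Nat.card {y : R // y ∈ Q.1 ∧ σ y = y} : ℤ)
      = ∑ y : R, if y ∈ Q.1 ∧ σ y = y then (1 : ℤ) else 0 := by
    intro Q
    rw [Nat.card_eq_fintype_card, Fintype.card_subtype, Finset.card_filter]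
    push_cast
    rfl
  calc (∑ Q : {Q : Subgroup R // Q.map σ.toMonoidHom = Q},
        (Nat.card {y : R // y ∈ Q.1 ∧ σ y = y} : ℤ) * μ Q T)
      = ∑ Q : {Q : Subgroup R // Q.map σ.toMonoidHom = Q},
          ∑ y : R, if y ∈ Q.1 ∧ σ y = y then μ Q T else 0 := by
        refine Finset.sum_congr rfl fun Q _ => ?_
        rw [hcard, Finset.sum_mul]
        refine Finset.sum_congr rfl fun y _ => ?_
        split <;> simp
    _ = ∑ y : R, if σ y = y ∧ Subgroup.zpowers y = ⊤ then (1 : ℤ) else 0 := by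
        rw [Finset.sum_comm]
        refine Finset.sum_congr rfl fun y _ => ?_
        by_cases hy : σ y = y
        · have hinv : (Subgroup.zpowers y).map σ.toMonoidHom = Subgroup.zpowers y := by
            rw [MonoidHom.map_zpowers]; simp [hy]
          set P : {Q : Subgroup R // Q.map σ.toMonoidHom = Q} := ⟨Subgroup.zpowers y, hinv⟩
          have hmem : ∀ Q : {Q : Subgroup R // Q.map σ.toMonoidHom = Q},
              (y ∈ Q.1 ∧ σ y = y) ↔ P ≤ Q := by
            intro Q
            constructor
            · intro h; exact Subtype.coe_le_coe.mp (Subgroup.zpowers_le.mpr h.1)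
            · intro h; exact ⟨Subgroup.zpowers_le.mp (Subtype.coe_le_coe.mpr h), hy⟩
          simp only [hmem]
          by_cases htop : Subgroup.zpowers y = ⊤
          · have hPT : P = T := Subtype.ext htop
            have : ∀ Q : {Q : Subgroup R // Q.map σ.toMonoidHom = Q},
                (P ≤ Q) ↔ Q = T := by
              intro Q
              constructor
              · intro h; exact le_antisymm (hleT Q) (hPT ▸ h)
              · rintro rfl; exact hPT.le
            simp only [this]
            rw [Finset.sum_ite_eq' Finset.univ T (fun Q => μ Q T)]
            simp [hy, htop, hμrefl]
            exact Finset.mem_univ T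
          · have hPlt : P < T := lt_of_le_of_ne (hleT P) (fun h => htop (congrArg Subtype.val h))
            have h0 := hμsum P T hPlt
            have hset : {Z : {Q : Subgroup R // Q.map σ.toMonoidHom = Q} | P ≤ Z ∧ Z ≤ T}
                = ↑(Finset.univ.filter (fun Z => P ≤ Z)) := by
              ext Z; simp only [Set.mem_setOf_eq, Finset.mem_coe, Finset.mem_filter, Finset.mem_univ, true_and, hleT Z, and_true]
            rw [hset, finsum_mem_coe_finset, Finset.sum_filter] at h0
            rw [h0]
            simp [hy, htop]
        · simp [hy]
    _ = (Nat.card {y : R // σ y = y ∧ Subgroup.zpowers y = ⊤} : ℤ) := by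
        rw [Nat.card_eq_fintype_card, Fintype.card_subtype, Finset.card_filter]
        push_cast
        rfl
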